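/- Every matching game (with finite sets of men and women, nonempty compact strategy spaces, continuous payoff functions, and arbitrary individually rational payoffs) admits an externally stable matching profile. -/

import Mathlib

/-- A (one-to-one, possibly partial) matching between two sides `M` and `W`. -/
structure Matching (M W : Type*) where
  muM : M → Option W
  muW : W → Option M
  coherent : ∀ i j, muM i = some j ↔ muW j = some i

variable {M W : Type*} {X : M → Type*} {Y : W → Type*}

/-- Utility of man `i` in the matching profile `(μ,x,y)`. -/
def uMan (U : ∀ i j, X i → Y j → ℝ) (ubar : M → ℝ)
    (μ : Matching M W) (x : ∀ i, X i) (y : ∀ j, Y j) (i : M) : ℝ :=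
  (μ.muM i).elim (ubar i) fun j => U i j (x i) (y j)

/-- Utility of woman `j` in the matching profile `(μ,x,y)`. -/
def vWoman (V : ∀ i j, X i → Y j → ℝ) (vbar : W → ℝ)
    (μ : Matching M W) (x : ∀ i, X i) (y : ∀ j, Y j) (j : W) : ℝ :=
  (μ.muW j).elim (vbar j) fun i => V i j (x i) (y j)

/-- External stability of a matching profile: individual rationality plus the
absence of blocking pairs. -/
def ExternallyStable (U V : ∀ i j, X i → Y j → ℝ) (ubar : M → ℝ) (vbar : W → ℝ)
    (μ : Matching M W) (x : ∀ i, X i) (y : ∀ j, Y j) : Prop :=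
  (∀ i, ubar i ≤ uMan U ubar μ x y i) ∧
  (∀ j, vbar j ≤ vWoman V vbar μ x y j) ∧
  ∀ i j, μ.muM i ≠ some j → ∀ (s : X i) (t : Y j),
    ¬ (uMan U ubar μ x y i < U i j s t ∧ vWoman V vbar μ x y j < V i j s t)

set_option linter.unusedSectionVars false
set_option maxHeartbeats 1000000

set_option linter.unusedSectionVars false

namespace StableAux

variable {C : Type*} [Fintype C] [DecidableEq C] {M W : Type*} [DecidableEq M] [DecidableEq W]

noncomputable def pick {α : Type*} [LinearOrder α] (r : C → α) (s : Finset C) : Option C :=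
  if h : s.Nonempty then some (Finset.exists_max_image s r h).choose else none

lemma pick_mem {α : Type*} [LinearOrder α] {r : C → α} {s : Finset C} {c : C}
    (h : pick r s = some c) : c ∈ s := by
  unfold pick at h
  split_ifs at h with hs
  · obtain rfl : (Finset.exists_max_image s r hs).choose = c := Option.some_inj.mp h
    exact (Finset.exists_max_image s r hs).choose_spec.1

lemma pick_le {α : Type*} [LinearOrder α] {r : C → α} {s : Finset C} {c : C}
    (h : pick r s = some c) : ∀ c' ∈ s, r c' ≤ r c := by
  unfold pick at h
  split_ifs at h with hs
  · obtain rfl : (Finset.exists_max_image s r hs).choose = c := Option.some_inj.mp h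
    exact (Finset.exists_max_image s r hs).choose_spec.2

lemma pick_isSome {α : Type*} [LinearOrder α] (r : C → α) {s : Finset C}
    (hs : s.Nonempty) : ∃ c, pick r s = some c := by
  unfold pick
  rw [dif_pos hs]
  exact ⟨_, rfl⟩

variable (mc : C → M) (wc : C → W) (mr wr : C → ℝ ×ₗ ℕ)

noncomputable def avail (R : Finset C) (i : M) : Finset C :=
  Finset.univ.filter (fun c => c ∉ R ∧ mc c = i)

noncomputable def prop (R : Finset C) (i : M) : Option C := pick mr (avail mc R i)

noncomputable def props (R : Finset C) : Finset C :=
  Finset.univ.filter (fun c => prop mc mr R (mc c) = some c)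

noncomputable def wprop (R : Finset C) (j : W) : Option C :=
  pick wr ((props mc mr R).filter (fun c => wc c = j))

noncomputable def step (R : Finset C) : Finset C :=
  R ∪ (props mc mr R).filter (fun c => wprop mc wc mr wr R (wc c) ≠ some c)

lemma prop_spec {R : Finset C} {i : M} {c : C} (h : prop mc mr R i = some c) :
    c ∉ R ∧ mc c = i := by
  have := pick_mem h
  simpa [avail] using this

lemma mem_props {R : Finset C} {c : C} :
    c ∈ props mc mr R ↔ prop mc mr R (mc c) = some c := by
  simp [props]

lemma props_not_mem {R : Finset C} {c : C} (h : c ∈ props mc mr R) : c ∉ R :=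
  ((prop_spec mc mr) ((mem_props mc mr).mp h)).1

lemma wprop_spec {R : Finset C} {j : W} {c : C} (h : wprop mc wc mr wr R j = some c) :
    c ∈ props mc mr R ∧ wc c = j := by
  have := pick_mem h
  simpa using this

-- a kept proposal is proposed again after one step
lemma kept {R : Finset C} {c0 : C} (h0 : c0 ∈ props mc mr R)
    (hk : wprop mc wc mr wr R (wc c0) = some c0) :
    c0 ∈ props mc mr (step mc wc mr wr R) := by
  have hav : avail mc (step mc wc mr wr R) (mc c0) = avail mc R (mc c0) := by
    ext c
    simp only [avail, Finset.mem_filter, Finset.mem_univ, true_and, step,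
      Finset.mem_union, not_or]
    constructor
    · exact fun h => ⟨h.1.1, h.2⟩
    · rintro ⟨hR, hmcc⟩
      refine ⟨⟨hR, fun hrej => ?_⟩, hmcc⟩
      have hmem := hrej
      have hc : c = c0 := by
        have h1 := (mem_props mc mr).mp hmem.1
        rw [hmcc] at h1
        have h2 := (mem_props mc mr).mp h0
        rw [h1] at h2
        exact Option.some_inj.mp h2
      subst hc
      exact hmem.2 hk
  rw [mem_props]
  unfold prop
  rw [hav]
  exact (mem_props mc mr).mp h0

-- women's held option only improves
lemma improve {R : Finset C} {c' : C} (h : c' ∈ props mc mr R) :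
    ∃ c'', c'' ∈ props mc mr (step mc wc mr wr R) ∧ wc c'' = wc c' ∧ wr c' ≤ wr c'' := by
  have hne : ((props mc mr R).filter (fun c => wc c = wc c')).Nonempty :=
    ⟨c', Finset.mem_filter.mpr ⟨h, rfl⟩⟩
  obtain ⟨cb, hcb⟩ := pick_isSome wr hne
  have hspec := wprop_spec mc wc mr wr hcb
  have hle : wr c' ≤ wr cb := pick_le hcb c' (Finset.mem_filter.mpr ⟨h, rfl⟩)
  have hkept : cb ∈ props mc mr (step mc wc mr wr R) := by
    apply kept mc wc mr wr hspec.1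
    rw [hspec.2]; exact hcb
  exact ⟨cb, hkept, hspec.2, hle⟩

def Inv (R : Finset C) : Prop :=
  ∀ c ∈ R, ∃ c', c' ∈ props mc mr R ∧ wc c' = wc c ∧ wr c < wr c'

lemma inv_step (hwr : Function.Injective wr) {R : Finset C}
    (hI : Inv mc wc mr wr R) : Inv mc wc mr wr (step mc wc mr wr R) := by
  intro c hc
  rcases Finset.mem_union.mp hc with hc | hc
  · obtain ⟨c', hc'p, hc'w, hc'lt⟩ := hI c hc
    obtain ⟨c'', h1, h2, h3⟩ := improve mc wc mr wr hc'p
    exact ⟨c'', h1, h2.trans hc'w, lt_of_lt_of_le hc'lt h3⟩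
  · have hmem := Finset.mem_filter.mp hc
    have hne : ((props mc mr R).filter (fun c2 => wc c2 = wc c)).Nonempty :=
      ⟨c, Finset.mem_filter.mpr ⟨hmem.1, rfl⟩⟩
    obtain ⟨cb, hcb⟩ := pick_isSome wr hne
    have hspec := wprop_spec mc wc mr wr hcb
    have hle : wr c ≤ wr cb := pick_le hcb c (Finset.mem_filter.mpr ⟨hmem.1, rfl⟩)
    have hlt : wr c < wr cb := by
      rcases lt_or_eq_of_le hle with h | h
      · exact h
      · exfalso; exact hmem.2 (by rw [(hwr h).symm] at hcb; exact hcb)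
    have hkept : cb ∈ props mc mr (step mc wc mr wr R) := by
      apply kept mc wc mr wr hspec.1
      rw [hspec.2]; exact hcb
    exact ⟨cb, hkept, hspec.2, hlt⟩

lemma exists_fixpoint (hwr : Function.Injective wr) :
    ∃ R : Finset C, Inv mc wc mr wr R ∧ step mc wc mr wr R = R := by
  suffices h : ∀ n (R : Finset C), Inv mc wc mr wr R →
      Finset.univ.card - R.card ≤ n → ∃ R', Inv mc wc mr wr R' ∧ step mc wc mr wr R' = R' by
    exact h (Finset.univ : Finset C).card (∅ : Finset C)
      (fun c hc => absurd hc (Finset.notMem_empty c)) (Nat.sub_le _ _)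
  intro n
  induction n with
  | zero =>
    intro R hI hcard
    refine ⟨R, hI, ?_⟩
    have hsub : R ⊆ step mc wc mr wr R := Finset.subset_union_left
    have : step mc wc mr wr R ⊆ R := by
      intro c hc
      rcases Finset.mem_union.mp hc with h | h
      · exact h
      · exfalso
        have hR : R.card = (Finset.univ : Finset C).card := by
          have h1 := Finset.card_le_univ R
          have h2 : (Finset.univ : Finset C).card = Fintype.card C := Finset.card_univ
          omega
        have : R = (Finset.univ : Finset C) := Finset.eq_univ_of_card R hR
        exact props_not_mem mc mr (Finset.mem_filter.mp h).1 (this ▸ Finset.mem_univ c)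
    exact Finset.Subset.antisymm this hsub
  | succ n ih =>
    intro R hI hcard
    by_cases hfix : step mc wc mr wr R = R
    · exact ⟨R, hI, hfix⟩
    · have hsub : R ⊆ step mc wc mr wr R := Finset.subset_union_left
      have hlt : R.card < (step mc wc mr wr R).card :=
        Finset.card_lt_card (Finset.ssubset_iff_subset_ne.mpr ⟨hsub, fun h => hfix h.symm⟩)
      have hle := Finset.card_le_univ (step mc wc mr wr R)
      have h2 : (Finset.univ : Finset C).card = Fintype.card C := Finset.card_univ
      exact ih (step mc wc mr wr R) (inv_step mc wc mr wr hwr hI) (by omega)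

theorem gs_exists (hwr : Function.Injective wr) :
    ∃ (f : M → Option C) (g : W → Option C),
      (∀ i c, f i = some c → mc c = i) ∧
      (∀ j c, g j = some c → wc c = j) ∧
      (∀ c, f (mc c) = some c ↔ g (wc c) = some c) ∧
      (∀ c, (∃ c', f (mc c) = some c' ∧ mr c ≤ mr c') ∨
            (∃ c', g (wc c) = some c' ∧ wr c ≤ wr c')) := by
  obtain ⟨R, hI, hfix⟩ := exists_fixpoint mc wc mr wr hwr
  have hrej : ∀ c ∈ props mc mr R, wprop mc wc mr wr R (wc c) = some c := by
    intro c hc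
    by_contra hne
    have hmem : c ∈ step mc wc mr wr R :=
      Finset.mem_union_right _ (Finset.mem_filter.mpr ⟨hc, hne⟩)
    rw [hfix] at hmem
    exact props_not_mem mc mr hc hmem
  refine ⟨prop mc mr R, wprop mc wc mr wr R, ?_, ?_, ?_, ?_⟩
  · exact fun i c h => (prop_spec mc mr h).2
  · exact fun j c h => (wprop_spec mc wc mr wr h).2
  · intro c
    constructor
    · intro h
      exact hrej c ((mem_props mc mr).mpr h)
    · intro h
      exact (mem_props mc mr).mp (wprop_spec mc wc mr wr h).1
  · intro c
    by_cases hcR : c ∈ R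
    · obtain ⟨c', hc'p, hc'w, hc'lt⟩ := hI c hcR
      right
      refine ⟨c', ?_, le_of_lt hc'lt⟩
      rw [← hc'w]
      exact hrej c' hc'p
    · left
      have hmem : c ∈ avail mc R (mc c) := by simp [avail, hcR]
      obtain ⟨c'', hc''⟩ := pick_isSome mr (⟨c, hmem⟩ : (avail mc R (mc c)).Nonempty)
      exact ⟨c'', hc'', pick_le hc'' c hmem⟩

end StableAux

section Assemble

variable [∀ i, Nonempty (X i)] [∀ j, Nonempty (Y j)] [DecidableEq M] [DecidableEq W]

lemma assemble (U V : ∀ i j, X i → Y j → ℝ) (ubar : M → ℝ) (vbar : W → ℝ)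
    {C : Type*} (mc : C → M) (wc : C → W)
    (xs : ∀ c : C, X (mc c)) (ys : ∀ c : C, Y (wc c))
    (f : M → Option C) (g : W → Option C)
    (h1 : ∀ i c, f i = some c → mc c = i)
    (h2 : ∀ j c, g j = some c → wc c = j)
    (h3 : ∀ c, f (mc c) = some c ↔ g (wc c) = some c) :
    ∃ (μ : Matching M W) (x : ∀ i, X i) (y : ∀ j, Y j),
      (∀ i, (f i = none ∧ uMan U ubar μ x y i = ubar i) ∨
        (∃ c, f i = some c ∧ mc c = i ∧
          uMan U ubar μ x y i = U (mc c) (wc c) (xs c) (ys c))) ∧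
      (∀ j, (g j = none ∧ vWoman V vbar μ x y j = vbar j) ∨
        (∃ c, g j = some c ∧ wc c = j ∧
          vWoman V vbar μ x y j = V (mc c) (wc c) (xs c) (ys c))) := by
  have hcoh : ∀ i j, (f i).map wc = some j ↔ (g j).map mc = some i := by
    intro i j
    constructor
    · intro h
      obtain ⟨c, hc, hw⟩ := Option.map_eq_some_iff.mp h
      have hm : mc c = i := h1 i c hc
      have hg : g (wc c) = some c := (h3 c).mp (by rw [hm]; exact hc)
      rw [hw] at hg
      rw [hg]
      simp [Option.map, hm]
    · intro h
      obtain ⟨c, hc, hm⟩ := Option.map_eq_some_iff.mp h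
      have hw : wc c = j := h2 j c hc
      have hf : f (mc c) = some c := (h3 c).mpr (by rw [hw]; exact hc)
      rw [hm] at hf
      rw [hf]
      simp [Option.map, hw]
  refine ⟨⟨fun i => (f i).map wc, fun j => (g j).map mc, hcoh⟩,
    fun i => (f i).elim (Classical.arbitrary _)
      (fun c => if h : mc c = i then h ▸ xs c else Classical.arbitrary _),
    fun j => (g j).elim (Classical.arbitrary _)
      (fun c => if h : wc c = j then h ▸ ys c else Classical.arbitrary _),
    ?_, ?_⟩
  · intro i
    cases hfi : f i with
    | none =>
      left
      refine ⟨rfl, ?_⟩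
      unfold uMan
      have hmu : (Matching.muM ⟨fun i => (f i).map wc, fun j => (g j).map mc, hcoh⟩ i)
          = (f i).map wc := rfl
      rw [hmu, hfi]
      rfl
    | some c =>
      right
      have hm : mc c = i := h1 i c hfi
      subst hm
      refine ⟨c, rfl, rfl, ?_⟩
      have hg : g (wc c) = some c := (h3 c).mp hfi
      unfold uMan
      have hmu : (Matching.muM ⟨fun i => (f i).map wc, fun j => (g j).map mc, hcoh⟩ (mc c))
          = some (wc c) := by
        show (f (mc c)).map wc = some (wc c)
        rw [hfi]; rfl
      rw [hmu]
      show U (mc c) (wc c) ((f (mc c)).elim _ _) ((g (wc c)).elim _ _)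
          = U (mc c) (wc c) (xs c) (ys c)
      rw [hfi, hg]
      show U (mc c) (wc c) (if h : mc c = mc c then h ▸ xs c else Classical.arbitrary _)
          (if h : wc c = wc c then h ▸ ys c else Classical.arbitrary _) = _
      rw [dif_pos rfl, dif_pos rfl]
  · intro j
    cases hgj : g j with
    | none =>
      left
      refine ⟨rfl, ?_⟩
      unfold vWoman
      have hmu : (Matching.muW ⟨fun i => (f i).map wc, fun j => (g j).map mc, hcoh⟩ j)
          = (g j).map mc := rfl
      rw [hmu, hgj]
      rfl
    | some c =>
      right
      have hw : wc c = j := h2 j c hgj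
      subst hw
      refine ⟨c, rfl, rfl, ?_⟩
      have hf : f (mc c) = some c := (h3 c).mpr hgj
      unfold vWoman
      have hmu : (Matching.muW ⟨fun i => (f i).map wc, fun j => (g j).map mc, hcoh⟩ (wc c))
          = some (mc c) := by
        show (g (wc c)).map mc = some (mc c)
        rw [hgj]; rfl
      rw [hmu]
      show V (mc c) (wc c) ((f (mc c)).elim _ _) ((g (wc c)).elim _ _)
          = V (mc c) (wc c) (xs c) (ys c)
      rw [hf, hgj]
      show V (mc c) (wc c) (if h : mc c = mc c then h ▸ xs c else Classical.arbitrary _)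
          (if h : wc c = wc c then h ▸ ys c else Classical.arbitrary _) = _
      rw [dif_pos rfl, dif_pos rfl]

end Assemble

section Approx

variable [Fintype M] [Fintype W]
variable [∀ i, TopologicalSpace (X i)] [∀ i, CompactSpace (X i)] [∀ i, Nonempty (X i)]
variable [∀ j, TopologicalSpace (Y j)] [∀ j, CompactSpace (Y j)] [∀ j, Nonempty (Y j)]

lemma approx (U V : ∀ i j, X i → Y j → ℝ)
    (hU : ∀ i j, Continuous fun p : X i × Y j => U i j p.1 p.2)
    (hV : ∀ i j, Continuous fun p : X i × Y j => V i j p.1 p.2)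
    (ubar : M → ℝ) (vbar : W → ℝ) {ε : ℝ} (hε : 0 < ε) :
    ∃ (μ : Matching M W) (x : ∀ i, X i) (y : ∀ j, Y j),
      (∀ i, ubar i ≤ uMan U ubar μ x y i) ∧
      (∀ j, vbar j ≤ vWoman V vbar μ x y j) ∧
      ∀ i j (s : X i) (t : Y j),
        U i j s t ≤ uMan U ubar μ x y i + 2*ε ∨
        V i j s t ≤ vWoman V vbar μ x y j + 2*ε := by
  classical
  -- a uniform bound on payoffs
  have hbd : ∀ i j, ∃ b : ℝ, ∀ s t, |U i j s t| ≤ b ∧ |V i j s t| ≤ b := by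
    intro i j
    have hcont : Continuous fun pr : X i × Y j => max |U i j pr.1 pr.2| |V i j pr.1 pr.2| :=
      ((hU i j).abs).max ((hV i j).abs)
    obtain ⟨z, -, hz⟩ := (isCompact_univ : IsCompact (Set.univ : Set (X i × Y j))).exists_isMaxOn
      Set.univ_nonempty hcont.continuousOn
    refine ⟨max |U i j z.1 z.2| |V i j z.1 z.2|, fun s t => ?_⟩
    have h1 := hz (Set.mem_univ (s, t))
    constructor
    · exact le_trans (le_max_left _ _) h1
    · exact le_trans (le_max_right _ _) h1
  choose Bf hBf using hbd
  set B : ℝ := 1 + ∑ i : M, ∑ j : W, |Bf i j| with hBdef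
  have hBbd : ∀ i j s t, |U i j s t| ≤ B ∧ |V i j s t| ≤ B := by
    intro i j s t
    have h2 : Bf i j ≤ ∑ i' : M, ∑ j' : W, |Bf i' j'| := by
      calc Bf i j ≤ |Bf i j| := le_abs_self _
        _ ≤ ∑ j' : W, |Bf i j'| :=
            Finset.single_le_sum (f := fun j' => |Bf i j'|)
              (fun _ _ => abs_nonneg _) (Finset.mem_univ j)
        _ ≤ ∑ i' : M, ∑ j' : W, |Bf i' j'| :=
            Finset.single_le_sum (f := fun i' => ∑ j' : W, |Bf i' j'|)
              (fun _ _ => Finset.sum_nonneg fun _ _ => abs_nonneg _) (Finset.mem_univ i)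
    have h1 := hBf i j s t
    exact ⟨by linarith [h1.1], by linarith [h1.2]⟩
  set N : ℤ := ⌈B/ε⌉ + 1 with hNdef
  have hrange : ∀ v : ℝ, |v| ≤ B → ⌊v/ε⌋ ∈ Finset.Icc (-N) N := by
    intro v hv
    have hv1 : v ≤ B := le_trans (le_abs_self _) hv
    have hv2 : -B ≤ v := neg_le_of_abs_le hv
    have hc : B / ε ≤ (⌈B/ε⌉ : ℝ) := Int.le_ceil _
    have h3 : (-B)/ε ≤ v/ε := by gcongr
    have h5 : v/ε ≤ B/ε := by gcongr
    have h4 : (⌊v/ε⌋ : ℝ) ≤ v/ε := Int.floor_le _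
    rw [Finset.mem_Icc]
    constructor
    · rw [Int.le_floor]
      have hNr : (((-N : ℤ)) : ℝ) = -((⌈B/ε⌉ : ℝ) + 1) := by
        rw [hNdef]; push_cast; ring
      rw [hNr]
      have h3' : -(B/ε) ≤ v/ε := by rwa [neg_div] at h3
      linarith
    · have : (⌊v/ε⌋ : ℝ) ≤ ((N : ℤ) : ℝ) := by
        rw [hNdef]; push_cast; linarith
      exact_mod_cast this
  -- the finite contract set
  set base : Finset (M × W × ℤ × ℤ) :=
    Finset.univ ×ˢ Finset.univ ×ˢ (Finset.Icc (-N) N) ×ˢ (Finset.Icc (-N) N) with hbase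
  set P : M × W × ℤ × ℤ → Prop := fun z =>
    (∃ (s : X z.1) (t : Y z.2.1), (z.2.2.1 : ℝ)*ε ≤ U z.1 z.2.1 s t ∧
      (z.2.2.2 : ℝ)*ε ≤ V z.1 z.2.1 s t) ∧
    ubar z.1 < (z.2.2.1 : ℝ)*ε ∧ vbar z.2.1 < (z.2.2.2 : ℝ)*ε with hPdef
  set C0 : Finset (M × W × ℤ × ℤ) := base.filter P with hC0
  have hPc : ∀ c : {z // z ∈ C0}, P c.1 := fun c => (Finset.mem_filter.mp c.2).2
  choose sf tf hsf htf using fun c : {z // z ∈ C0} => (hPc c).1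
  set mc : {z // z ∈ C0} → M := fun c => c.1.1 with hmc
  set wc : {z // z ∈ C0} → W := fun c => c.1.2.1 with hwc
  set pp : {z // z ∈ C0} → ℝ := fun c => U (mc c) (wc c) (sf c) (tf c) with hpp
  set qq : {z // z ∈ C0} → ℝ := fun c => V (mc c) (wc c) (sf c) (tf c) with hqq
  set rk : {z // z ∈ C0} → ℕ := fun c => (Fintype.equivFin _ c : ℕ) with hrk
  have hrkinj : Function.Injective rk := by
    intro a b h
    exact (Fintype.equivFin _).injective (Fin.val_injective h)
  set mr : {z // z ∈ C0} → ℝ ×ₗ ℕ := fun c => toLex (pp c, rk c) with hmr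
  set wr : {z // z ∈ C0} → ℝ ×ₗ ℕ := fun c => toLex (qq c, rk c) with hwr
  have hwrinj : Function.Injective wr := by
    intro a b h
    apply hrkinj
    have := congrArg (fun z : ℝ ×ₗ ℕ => (ofLex z).2) h
    exact this
  obtain ⟨f, g, h1, h2, h3, h4⟩ := StableAux.gs_exists mc wc mr wr hwrinj
  obtain ⟨μ, x, y, hA, hB⟩ := assemble U V ubar vbar mc wc sf tf f g h1 h2 h3
  -- lower bounds on realized utilities of matched agents
  have hman : ∀ i, ubar i ≤ uMan U ubar μ x y i ∧
      (∀ c, f i = some c → uMan U ubar μ x y i = pp c) := by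
    intro i
    rcases hA i with ⟨hfn, hval⟩ | ⟨c, hfc, hmcc, hval⟩
    · exact ⟨le_of_eq hval.symm, fun c hc => by rw [hfn] at hc; cases hc⟩
    · have hir : ubar (mc c) < (c.1.2.2.1 : ℝ)*ε := (hPc c).2.1
      have hple : (c.1.2.2.1 : ℝ)*ε ≤ pp c := hsf c
      constructor
      · rw [hval, ← hmcc]
        exact le_of_lt (lt_of_lt_of_le hir hple)
      · intro c' hc'
        have hcc : c' = c := by rw [hfc] at hc'; exact (Option.some_inj.mp hc').symm
        rw [hcc]; exact hval
  have hwoman : ∀ j, vbar j ≤ vWoman V vbar μ x y j ∧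
      (∀ c, g j = some c → vWoman V vbar μ x y j = qq c) := by
    intro j
    rcases hB j with ⟨hgn, hval⟩ | ⟨c, hgc, hwcc, hval⟩
    · exact ⟨le_of_eq hval.symm, fun c hc => by rw [hgn] at hc; cases hc⟩
    · have hir : vbar (wc c) < (c.1.2.2.2 : ℝ)*ε := (hPc c).2.2
      have hqle : (c.1.2.2.2 : ℝ)*ε ≤ qq c := htf c
      constructor
      · rw [hval, ← hwcc]
        exact le_of_lt (lt_of_lt_of_le hir hqle)
      · intro c' hc'
        have hcc : c' = c := by rw [hgc] at hc'; exact (Option.some_inj.mp hc').symm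
        rw [hcc]; exact hval
  refine ⟨μ, x, y, fun i => (hman i).1, fun j => (hwoman j).1, ?_⟩
  -- no 2ε-blocking
  intro i j s t
  by_contra hcon
  push_neg at hcon
  obtain ⟨hu, hv⟩ := hcon
  set a : ℝ := uMan U ubar μ x y i with ha
  set b : ℝ := vWoman V vbar μ x y j with hb
  set k : ℤ := ⌊U i j s t / ε⌋ with hk
  set l : ℤ := ⌊V i j s t / ε⌋ with hl
  have hkle : (k : ℝ)*ε ≤ U i j s t := by
    rw [hk]
    have := Int.floor_le (U i j s t / ε)
    calc (⌊U i j s t / ε⌋ : ℝ)*ε ≤ (U i j s t / ε)*ε := by nlinarith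
      _ = U i j s t := div_mul_cancel₀ _ (ne_of_gt hε)
  have hkgt : U i j s t - ε < (k : ℝ)*ε := by
    rw [hk]
    have := Int.sub_one_lt_floor (U i j s t / ε)
    have h7 : (U i j s t / ε - 1) * ε < (⌊U i j s t / ε⌋ : ℝ) * ε := by nlinarith
    calc U i j s t - ε = (U i j s t / ε - 1) * ε := by
          field_simp
      _ < _ := h7
  have hlle : (l : ℝ)*ε ≤ V i j s t := by
    rw [hl]
    have := Int.floor_le (V i j s t / ε)
    calc (⌊V i j s t / ε⌋ : ℝ)*ε ≤ (V i j s t / ε)*ε := by nlinarith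
      _ = V i j s t := div_mul_cancel₀ _ (ne_of_gt hε)
  have hlgt : V i j s t - ε < (l : ℝ)*ε := by
    rw [hl]
    have := Int.sub_one_lt_floor (V i j s t / ε)
    have h7 : (V i j s t / ε - 1) * ε < (⌊V i j s t / ε⌋ : ℝ) * ε := by nlinarith
    calc V i j s t - ε = (V i j s t / ε - 1) * ε := by
          field_simp
      _ < _ := h7
  have haIR : ubar i ≤ a := (hman i).1
  have hbIR : vbar j ≤ b := (hwoman j).1
  -- the blocking contract
  have hzmem : (i, j, k, l) ∈ C0 := by
    rw [hC0, Finset.mem_filter]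
    constructor
    · rw [hbase]
      simp only [Finset.mem_product, Finset.mem_univ, true_and]
      constructor
      · exact hrange _ (hBbd i j s t).1
      · exact hrange _ (hBbd i j s t).2
    · refine ⟨⟨s, t, hkle, hlle⟩, ?_, ?_⟩
      · have : a + 2*ε < U i j s t := hu
        linarith
      · have : b + 2*ε < V i j s t := hv
        linarith
  set c : {z // z ∈ C0} := ⟨(i, j, k, l), hzmem⟩ with hc
  have hpc : (k : ℝ)*ε ≤ pp c := hsf c
  have hqc : (l : ℝ)*ε ≤ qq c := htf c
  rcases h4 c with ⟨c', hfc', hle⟩ | ⟨c', hgc', hle⟩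
  · -- man side contradiction
    have hmcc : mc c = i := rfl
    rw [hmcc] at hfc'
    have hval : a = pp c' := (hman i).2 c' hfc'
    have hple : pp c ≤ pp c' := by
      rcases (Prod.Lex.le_iff).mp hle with h | ⟨h, -⟩
      · exact le_of_lt h
      · exact le_of_eq h
    have : U i j s t - ε < pp c' := lt_of_lt_of_le (lt_of_lt_of_le hkgt hpc) hple
    rw [← hval] at this
    linarith
  · -- woman side contradiction
    have hwcc : wc c = j := rfl
    rw [hwcc] at hgc'
    have hval : b = qq c' := (hwoman j).2 c' hgc'
    have hqle : qq c ≤ qq c' := by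
      rcases (Prod.Lex.le_iff).mp hle with h | ⟨h, -⟩
      · exact le_of_lt h
      · exact le_of_eq h
    have : V i j s t - ε < qq c' := lt_of_lt_of_le (lt_of_lt_of_le hlgt hqc) hqle
    rw [← hval] at this
    linarith

end Approx

section Main

variable [Fintype M] [Fintype W]
variable [∀ i, TopologicalSpace (X i)] [∀ i, CompactSpace (X i)] [∀ i, Nonempty (X i)]
variable [∀ j, TopologicalSpace (Y j)] [∀ j, CompactSpace (Y j)] [∀ j, Nonempty (Y j)]

/-- The set of profiles that are individually rational and admit no `2ε`-blocking pair. -/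
def SBlock (U V : ∀ i j, X i → Y j → ℝ) (ubar : M → ℝ) (vbar : W → ℝ)
    (μ : Matching M W) (ε : ℝ) : Set ((∀ i, X i) × (∀ j, Y j)) :=
  {z | (∀ i, ubar i ≤ uMan U ubar μ z.1 z.2 i) ∧
       (∀ j, vbar j ≤ vWoman V vbar μ z.1 z.2 j) ∧
       (∀ i j (s : X i) (t : Y j),
          U i j s t ≤ uMan U ubar μ z.1 z.2 i + 2*ε ∨
          V i j s t ≤ vWoman V vbar μ z.1 z.2 j + 2*ε)}

lemma uMan_continuous (U : ∀ i j, X i → Y j → ℝ)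
    (hU : ∀ i j, Continuous fun p : X i × Y j => U i j p.1 p.2)
    (ubar : M → ℝ) (μ : Matching M W) (i : M) :
    Continuous (fun z : (∀ i, X i) × (∀ j, Y j) => uMan U ubar μ z.1 z.2 i) := by
  cases hmi : μ.muM i with
  | none =>
    simp only [uMan, hmi, Option.elim]
    exact continuous_const
  | some j =>
    simp only [uMan, hmi, Option.elim]
    exact (hU i j).comp (Continuous.prodMk ((continuous_apply i).comp continuous_fst)
      ((continuous_apply j).comp continuous_snd))

lemma vWoman_continuous (V : ∀ i j, X i → Y j → ℝ)
    (hV : ∀ i j, Continuous fun p : X i × Y j => V i j p.1 p.2)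
    (vbar : W → ℝ) (μ : Matching M W) (j : W) :
    Continuous (fun z : (∀ i, X i) × (∀ j, Y j) => vWoman V vbar μ z.1 z.2 j) := by
  cases hmj : μ.muW j with
  | none =>
    simp only [vWoman, hmj, Option.elim]
    exact continuous_const
  | some i =>
    simp only [vWoman, hmj, Option.elim]
    exact (hV i j).comp (Continuous.prodMk ((continuous_apply i).comp continuous_fst)
      ((continuous_apply j).comp continuous_snd))

lemma SBlock_closed (U V : ∀ i j, X i → Y j → ℝ)
    (hU : ∀ i j, Continuous fun p : X i × Y j => U i j p.1 p.2)
    (hV : ∀ i j, Continuous fun p : X i × Y j => V i j p.1 p.2)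
    (ubar : M → ℝ) (vbar : W → ℝ) (μ : Matching M W) (ε : ℝ) :
    IsClosed (SBlock U V ubar vbar μ ε) := by
  unfold SBlock
  simp only [Set.setOf_and, Set.setOf_forall]
  apply IsClosed.inter
  · exact isClosed_iInter fun i =>
      isClosed_le continuous_const (uMan_continuous U hU ubar μ i)
  apply IsClosed.inter
  · exact isClosed_iInter fun j =>
      isClosed_le continuous_const (vWoman_continuous V hV vbar μ j)
  · refine isClosed_iInter fun i => isClosed_iInter fun j =>
      isClosed_iInter fun s => isClosed_iInter fun t => ?_
    rw [Set.setOf_or]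
    exact (isClosed_le continuous_const
        ((uMan_continuous U hU ubar μ i).add continuous_const)).union
      (isClosed_le continuous_const
        ((vWoman_continuous V hV vbar μ j).add continuous_const))

lemma SBlock_mono (U V : ∀ i j, X i → Y j → ℝ) (ubar : M → ℝ) (vbar : W → ℝ)
    (μ : Matching M W) {ε ε' : ℝ} (h : ε ≤ ε') :
    SBlock U V ubar vbar μ ε ⊆ SBlock U V ubar vbar μ ε' := by
  intro z hz
  refine ⟨hz.1, hz.2.1, fun i j s t => ?_⟩
  rcases hz.2.2 i j s t with h' | h'
  · left; linarith
  · right; linarith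

lemma matching_finite : Finite (Matching M W) := by
  apply Finite.of_injective (fun μ : Matching M W => μ.muM)
  intro μ1 μ2 h
  obtain ⟨m1, w1, c1⟩ := μ1
  obtain ⟨m2, w2, c2⟩ := μ2
  simp only at h
  subst h
  suffices hw : w1 = w2 by subst hw; rfl
  funext j
  cases hw1 : w1 j with
  | some i =>
    have h1 : m1 i = some j := (c1 i j).mpr hw1
    exact ((c2 i j).mp h1).symm
  | none =>
    cases hw2 : w2 j with
    | some i =>
      have h2 : m1 i = some j := (c2 i j).mpr hw2
      have := (c1 i j).mp h2
      rw [this] at hw1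
      cases hw1
    | none => rfl

theorem exists_stable' (U V : ∀ i j, X i → Y j → ℝ)
    (hU : ∀ i j, Continuous fun p : X i × Y j => U i j p.1 p.2)
    (hV : ∀ i j, Continuous fun p : X i × Y j => V i j p.1 p.2)
    (ubar : M → ℝ) (vbar : W → ℝ) :
    ∃ (μ : Matching M W) (x : ∀ i, X i) (y : ∀ j, Y j),
      ExternallyStable U V ubar vbar μ x y := by
  classical
  have happ : ∀ n : ℕ, ∃ μ : Matching M W,
      (SBlock U V ubar vbar μ (1/((n:ℝ)+1))).Nonempty := by
    intro n
    have hpos : (0:ℝ) < 1/((n:ℝ)+1) := by positivity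
    obtain ⟨μ, x, y, hIR1, hIR2, hblk⟩ := approx U V hU hV ubar vbar hpos
    exact ⟨μ, ⟨(x, y), hIR1, hIR2, hblk⟩⟩
  choose Q hQ using happ
  have : Finite (Matching M W) := matching_finite
  obtain ⟨μ, hμ⟩ := Finite.exists_infinite_fiber Q
  have hinf : (Q ⁻¹' {μ} : Set ℕ).Infinite := Set.infinite_coe_iff.mp hμ
  have hTne : ∀ n : ℕ, (SBlock U V ubar vbar μ (1/((n:ℝ)+1))).Nonempty := by
    intro n
    obtain ⟨m, hm, hlt⟩ := hinf.exists_gt n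
    have hm' : Q m = μ := hm
    have h1 := hQ m
    rw [hm'] at h1
    refine h1.mono (SBlock_mono U V ubar vbar μ ?_)
    have h2 : ((n:ℝ)+1) ≤ ((m:ℝ)+1) := by
      have : (n:ℝ) ≤ (m:ℝ) := by exact_mod_cast le_of_lt hlt
      linarith
    exact one_div_le_one_div_of_le (by positivity) h2
  obtain ⟨z, hz⟩ := IsCompact.nonempty_iInter_of_sequence_nonempty_isCompact_isClosed
    (fun n => SBlock U V ubar vbar μ (1/((n:ℝ)+1)))
    (fun n => by
      apply SBlock_mono U V ubar vbar μ
      have h2 : ((n:ℝ)+1) ≤ (((n+1:ℕ):ℝ)+1) := by push_cast; linarith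
      exact one_div_le_one_div_of_le (by positivity) h2)
    hTne
    (IsClosed.isCompact (SBlock_closed U V hU hV ubar vbar μ _))
    (fun n => SBlock_closed U V hU hV ubar vbar μ _)
  have hzmem : ∀ n : ℕ, z ∈ SBlock U V ubar vbar μ (1/((n:ℝ)+1)) := by
    intro n
    exact Set.mem_iInter.mp hz n
  refine ⟨μ, z.1, z.2, (hzmem 0).1, (hzmem 0).2.1, ?_⟩
  intro i j hne s t hcon
  obtain ⟨h1, h2⟩ := hcon
  set a : ℝ := uMan U ubar μ z.1 z.2 i with ha
  set b : ℝ := vWoman V vbar μ z.1 z.2 j with hb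
  set d : ℝ := min (U i j s t - a) (V i j s t - b) with hd
  have hdpos : 0 < d := lt_min (by linarith) (by linarith)
  obtain ⟨n, hn⟩ := exists_nat_gt (2/d)
  have hn1 : (0:ℝ) < (n:ℝ)+1 := by positivity
  have hεd : 2*(1/((n:ℝ)+1)) < d := by
    rw [div_lt_iff₀ hdpos] at hn
    rw [mul_one_div, div_lt_iff₀ hn1]
    nlinarith
  have hd1 : d ≤ U i j s t - a := min_le_left _ _
  have hd2 : d ≤ V i j s t - b := min_le_right _ _
  rcases (hzmem n).2.2 i j s t with h' | h'
  · linarith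
  · linarith

end Main

/-- Every matching game with finite sets of agents, nonempty compact strategy
spaces and continuous payoff functions admits an externally stable matching
profile. -/
theorem exists_externally_stable_matching_profile
    {M W : Type*} [Fintype M] [Fintype W]
    {X : M → Type*} {Y : W → Type*}
    [∀ i, TopologicalSpace (X i)] [∀ i, CompactSpace (X i)] [∀ i, Nonempty (X i)]
    [∀ j, TopologicalSpace (Y j)] [∀ j, CompactSpace (Y j)] [∀ j, Nonempty (Y j)]
    (U V : ∀ i j, X i → Y j → ℝ)
    (hU : ∀ i j, Continuous fun p : X i × Y j => U i j p.1 p.2)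
    (hV : ∀ i j, Continuous fun p : X i × Y j => V i j p.1 p.2)
    (ubar : M → ℝ) (vbar : W → ℝ) :
    ∃ (μ : Matching M W) (x : ∀ i, X i) (y : ∀ j, Y j),
      ExternallyStable U V ubar vbar μ x y := by
  exact exists_stable' U V hU hV ubar vbar
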